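/- Let (W, S) be a Coxeter system, ε : W → W an automorphism, J, J' ⊆ S with ε(J) = J', and (J_n, J'_n, u_n)_{n≥0} an element of S(J, ε). Then for every n ≥ 0, the product u_0 u_1 ⋯ u_n lies in Wᴶⁿ, i.e. it is a minimal length representative of its left coset modulo W_{J_n}. -/

import Mathlib

namespace Lusztig

variable {B : Type*} {W : Type*} [Group W] {M : CoxeterMatrix B}

/-- The standard parabolic subgroup `W_K` generated by the simple reflections in `K`. -/
def WP (cs : CoxeterSystem M W) (K : Set B) : Subgroup W :=
  Subgroup.closure (cs.simple '' K)

/-- `w` is the unique minimal length element of its left coset `W_K w`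
(i.e. `w ∈ ᴷW`). -/
def IsMinL (cs : CoxeterSystem M W) (K : Set B) (w : W) : Prop :=
  ∀ a ∈ WP cs K, a * w ≠ w → cs.length w < cs.length (a * w)

/-- `w` is the unique minimal length element of its right coset `w W_K`
(i.e. `w ∈ Wᴷ`). -/
def IsMinR (cs : CoxeterSystem M W) (K : Set B) (w : W) : Prop :=
  ∀ b ∈ WP cs K, w * b ≠ w → cs.length w < cs.length (w * b)

/-- `x` is the unique minimal length element of its double coset `W_K x W_{K'}`
(i.e. `x ∈ ᴷWᴷ'`). -/
def IsMinDC (cs : CoxeterSystem M W) (K K' : Set B) (x : W) : Prop :=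
  ∀ a ∈ WP cs K, ∀ b ∈ WP cs K', a * x * b ≠ x → cs.length x < cs.length (a * x * b)

/-- `x` is the unique minimal length element of the double coset `W_K g W_{K'}`. -/
def IsMinOf (cs : CoxeterSystem M W) (K K' : Set B) (g x : W) : Prop :=
  (∃ a ∈ WP cs K, ∃ b ∈ WP cs K', x = a * g * b) ∧
  ∀ a ∈ WP cs K, ∀ b ∈ WP cs K', a * g * b ≠ x → cs.length x < cs.length (a * g * b)

/-- `Ad(x)J ∩ S`, as a set of indices of simple reflections:
the set of `s` with `simple s = x * (simple t) * x⁻¹` for some `t ∈ J`. -/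
def AdSet (cs : CoxeterSystem M W) (x : W) (J : Set B) : Set B :=
  {s | ∃ t ∈ J, cs.simple s = x * cs.simple t * x⁻¹}

/-- The product `u 0 * u 1 * ⋯ * u (n-1)`. -/
def pr (u : ℕ → W) (n : ℕ) : W := ((List.range n).map u).prod

/-- Lusztig's set `S(J, ε)` (2.3): sequences `(J_n, J'_n, u_n)` with
`J = J_0 ⊇ J_1 ⊇ ⋯`, `ε(J_n) = ε(J_{n-1}) ∩ Ad(u_0⋯u_{n-1})J_{n-1}` (n ≥ 1),
`J'_0 = ε(J) = J'`, `J'_n = J_{n-1} ∩ Ad(u_0⋯u_{n-1})⁻¹ε(J_{n-1})` (n ≥ 1),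
`u_n ∈ W_{J_{n-1}}` (n ≥ 1), `u_n ∈ {}^{J'_n}W ∩ W^{J_n}` (n ≥ 0).
Here `ε` is encoded by its restriction `f : B ≃ B` to the simple reflections. -/
structure SSeq (cs : CoxeterSystem M W) (f : B ≃ B) (J : Set B) where
  Jn : ℕ → Set B
  J'n : ℕ → Set B
  u : ℕ → W
  hJ0 : Jn 0 = J
  hJ'0 : J'n 0 = f '' J
  hmono : ∀ n, Jn (n + 1) ⊆ Jn n
  hb : ∀ n, f '' Jn (n + 1) = (f '' Jn n) ∩ AdSet cs (pr u (n + 1)) (Jn n)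
  hc : ∀ n, J'n (n + 1) = Jn n ∩ AdSet cs (pr u (n + 1))⁻¹ (f '' Jn n)
  hd : ∀ n, u (n + 1) ∈ WP cs (Jn n)
  he : ∀ n, IsMinL cs (J'n n) (u n) ∧ IsMinR cs (Jn n) (u n)

/-- Lusztig's set `T(J, ε)` (2.2): sequences `(J_n, w_n)` with
`J = J_0 ⊇ J_1 ⊇ ⋯`, `J_n = J_{n-1} ∩ ε⁻¹(Ad(w_{n-1})J_{n-1})` (n ≥ 1),
`w_n ∈ {}^{ε(J_n)}W^{J_n}` (n ≥ 0), `w_n ∈ W_{ε(J_n)} w_{n-1} W_{J_{n-1}}` (n ≥ 1). -/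
structure TSeq (cs : CoxeterSystem M W) (f : B ≃ B) (J : Set B) where
  Jn : ℕ → Set B
  w : ℕ → W
  hJ0 : Jn 0 = J
  hmono : ∀ n, Jn (n + 1) ⊆ Jn n
  hb : ∀ n, Jn (n + 1) = Jn n ∩ f.symm '' AdSet cs (w n) (Jn n)
  hc : ∀ n, IsMinDC cs (f '' Jn n) (Jn n) (w n)
  hd : ∀ n, ∃ a ∈ WP cs (f '' Jn (n + 1)), ∃ b ∈ WP cs (Jn n), w (n + 1) = a * w n * b

section ExchangeTheory

variable (cs : CoxeterSystem M W)

/-- An indicator function valued in `ZMod 2`. -/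
noncomputable def ind (a b : W) : ZMod 2 :=
  @ite _ (a = b) (Classical.propDecidable _) 1 0

lemma ind_pos {a b : W} (h : a = b) : ind a b = 1 := by unfold ind; exact if_pos h

lemma ind_neg {a b : W} (h : ¬a = b) : ind a b = 0 := by unfold ind; exact if_neg h

lemma ind_congr {a b c d : W} (h : (a = b) ↔ (c = d)) : ind a b = ind c d := by
  by_cases h1 : a = b
  · rw [ind_pos h1, ind_pos (h.mp h1)]
  · rw [ind_neg h1, ind_neg (fun hc => h1 (h.mpr hc))]

lemma conj_eq_iff (a b c t : W) : a * t * b = c ↔ t = a⁻¹ * c * b⁻¹ := by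
  constructor
  · intro h; rw [← h]; group
  · intro h; rw [h]; group

lemma zmod2_cases : ∀ a : ZMod 2, a = 0 ∨ a = 1 := by decide
lemma zmod2_add_self : ∀ a : ZMod 2, a + a = 0 := by decide

/-- The function underlying the standard permutation representation of `W` on
reflections times `ZMod 2`. -/
noncomputable def gfun (i : B) : W × ZMod 2 → W × ZMod 2 :=
  fun p => (cs.simple i * p.1 * cs.simple i, p.2 + ind p.1 (cs.simple i))

lemma gfun_invol (i : B) : Function.Involutive (gfun cs i) := by
  rintro ⟨t, e⟩
  unfold gfun
  dsimp only
  have hiff : (cs.simple i * t * cs.simple i = cs.simple i) ↔ (t = cs.simple i) := by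
    rw [conj_eq_iff, inv_mul_cancel, one_mul, cs.inv_simple]
  have h1 : cs.simple i * (cs.simple i * t * cs.simple i) * cs.simple i = t := by
    calc cs.simple i * (cs.simple i * t * cs.simple i) * cs.simple i
        = (cs.simple i * cs.simple i) * t * (cs.simple i * cs.simple i) := by group
      _ = t := by rw [cs.simple_mul_simple_self]; group
  rw [h1, ind_congr hiff]
  by_cases h : t = cs.simple i
  · rw [ind_pos h, add_assoc, (by decide : (1 : ZMod 2) + 1 = 0), add_zero]
  · rw [ind_neg h, add_zero, add_zero]

/-- The generators of the permutation representation. -/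
noncomputable def gperm (i : B) : Equiv.Perm (W × ZMod 2) :=
  ⟨gfun cs i, gfun cs i, gfun_invol cs i, gfun_invol cs i⟩

lemma gperm_apply (i : B) (p : W × ZMod 2) :
    gperm cs i p = (cs.simple i * p.1 * cs.simple i, p.2 + ind p.1 (cs.simple i)) := rfl

lemma sj_pow (i j : B) (m : ℕ) :
    cs.simple j * (cs.simple i * cs.simple j) ^ m
      = ((cs.simple i * cs.simple j)⁻¹) ^ m * cs.simple j := by
  induction m with
  | zero => simp
  | succ m ih =>
    rw [pow_succ, ← mul_assoc, ih, mul_assoc]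
    have h1 : cs.simple j * (cs.simple i * cs.simple j)
        = (cs.simple i * cs.simple j)⁻¹ * cs.simple j := by
      rw [mul_inv_rev, cs.inv_simple, cs.inv_simple]
      group
    rw [h1, ← mul_assoc, ← pow_succ]

lemma helper_r (i j : B) (n : ℕ) :
    ((cs.simple i * cs.simple j)⁻¹) ^ n * cs.simple j * (cs.simple i * cs.simple j) ^ n
      = ((cs.simple i * cs.simple j)⁻¹) ^ (2 * n) * cs.simple j := by
  rw [mul_assoc, sj_pow, ← mul_assoc, ← pow_add, ← two_mul]

lemma helper_r2 (i j : B) (n : ℕ) :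
    ((cs.simple i * cs.simple j)⁻¹) ^ n * (cs.simple j * cs.simple i * cs.simple j) *
        (cs.simple i * cs.simple j) ^ n
      = ((cs.simple i * cs.simple j)⁻¹) ^ (2 * n + 1) * cs.simple j := by
  have h1 : cs.simple j * cs.simple i * cs.simple j
      = (cs.simple i * cs.simple j)⁻¹ * cs.simple j := by
    rw [mul_inv_rev, cs.inv_simple, cs.inv_simple]
  rw [h1, ← mul_assoc, ← pow_succ, mul_assoc, sj_pow, ← mul_assoc, ← pow_add,
    show n + 1 + n = 2 * n + 1 from by omega]

lemma gperm_mul_pow_apply (i j : B) (n : ℕ) (t : W) (e : ZMod 2) :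
    ((gperm cs i * gperm cs j) ^ n) (t, e) =
      ((cs.simple i * cs.simple j) ^ n * t * ((cs.simple i * cs.simple j)⁻¹) ^ n,
        e + ∑ a ∈ Finset.range (2 * n),
          ind t (((cs.simple i * cs.simple j)⁻¹) ^ a * cs.simple j)) := by
  induction n with
  | zero => simp
  | succ n ih =>
    rw [pow_succ' (gperm cs i * gperm cs j) n, Equiv.Perm.mul_apply, ih,
      Equiv.Perm.mul_apply, gperm_apply, gperm_apply]
    dsimp only
    have e1 : ind ((cs.simple i * cs.simple j) ^ n * t * ((cs.simple i * cs.simple j)⁻¹) ^ n)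
          (cs.simple j)
        = ind t (((cs.simple i * cs.simple j)⁻¹) ^ (2 * n) * cs.simple j) := by
      apply ind_congr
      rw [conj_eq_iff, ← helper_r cs i j n,
        ← inv_pow (cs.simple i * cs.simple j) n,
        ← inv_pow (cs.simple i * cs.simple j)⁻¹ n, inv_inv]
    have e2 : ind (cs.simple j *
            ((cs.simple i * cs.simple j) ^ n * t * ((cs.simple i * cs.simple j)⁻¹) ^ n) *
            cs.simple j) (cs.simple i)
        = ind t (((cs.simple i * cs.simple j)⁻¹) ^ (2 * n + 1) * cs.simple j) := by
      apply ind_congr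
      have hrw : cs.simple j *
            ((cs.simple i * cs.simple j) ^ n * t * ((cs.simple i * cs.simple j)⁻¹) ^ n) *
            cs.simple j
          = (cs.simple j * (cs.simple i * cs.simple j) ^ n) * t *
            (((cs.simple i * cs.simple j)⁻¹) ^ n * cs.simple j) := by
        simp only [mul_assoc]
      rw [hrw, conj_eq_iff, ← helper_r2 cs i j n]
      have : (cs.simple j * (cs.simple i * cs.simple j) ^ n)⁻¹ * cs.simple i *
            (((cs.simple i * cs.simple j)⁻¹) ^ n * cs.simple j)⁻¹
          = ((cs.simple i * cs.simple j)⁻¹) ^ n *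
            (cs.simple j * cs.simple i * cs.simple j) * (cs.simple i * cs.simple j) ^ n := by
        rw [mul_inv_rev (cs.simple j) ((cs.simple i * cs.simple j) ^ n),
          mul_inv_rev (((cs.simple i * cs.simple j)⁻¹) ^ n) (cs.simple j),
          cs.inv_simple, ← inv_pow (cs.simple i * cs.simple j) n,
          ← inv_pow (cs.simple i * cs.simple j)⁻¹ n, inv_inv]
        simp only [mul_assoc]
      rw [this]
    rw [e1, e2]
    have hr : 2 * (n + 1) = 2 * n + 1 + 1 := by ring
    rw [hr, Finset.sum_range_succ, Finset.sum_range_succ]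
    refine Prod.ext ?_ ?_
    · dsimp only
      rw [pow_succ' (cs.simple i * cs.simple j) n, pow_succ ((cs.simple i * cs.simple j)⁻¹) n,
        mul_inv_rev (cs.simple i) (cs.simple j), cs.inv_simple, cs.inv_simple]
      simp only [mul_assoc]
    · dsimp only
      ring


lemma braid : M.IsLiftable (fun i => gperm cs i) := by
  intro i j
  show (gperm cs i * gperm cs j) ^ M i j = 1
  apply Equiv.ext
  rintro ⟨t, e⟩
  rw [gperm_mul_pow_apply, Equiv.Perm.one_apply]
  have hP := cs.simple_mul_simple_pow i j
  have hQ : ((cs.simple i * cs.simple j)⁻¹) ^ (M i j) = 1 := by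
    rw [inv_pow, hP, inv_one]
  have hsum : ∑ a ∈ Finset.range (2 * M i j),
      ind t (((cs.simple i * cs.simple j)⁻¹) ^ a * cs.simple j) = 0 := by
    rw [two_mul, Finset.sum_range_add]
    have hper : ∑ x ∈ Finset.range (M i j),
        ind t (((cs.simple i * cs.simple j)⁻¹) ^ (M i j + x) * cs.simple j)
        = ∑ x ∈ Finset.range (M i j),
        ind t (((cs.simple i * cs.simple j)⁻¹) ^ x * cs.simple j) :=
      Finset.sum_congr rfl (fun x _ => ind_congr (by rw [pow_add, hQ, one_mul]))
    rw [hper]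
    exact zmod2_add_self _
  rw [hP, hQ, one_mul, mul_one, hsum, add_zero]

/-- The permutation representation of `W` on `W × ZMod 2`. -/
noncomputable def phi : W →* Equiv.Perm (W × ZMod 2) := cs.lift ⟨fun i => gperm cs i, braid cs⟩

lemma phi_simple (i : B) : phi cs (cs.simple i) = gperm cs i :=
  cs.lift_apply_simple (braid cs) i

/-- `eta cs w t` is the parity of the number of occurrences of `t` in the right
inversion sequence of any word for `w`. -/
noncomputable def eta (w t : W) : ZMod 2 := ((phi cs w) (t, 0)).2

lemma phi_wordProd (ω : List B) (t : W) (e : ZMod 2) :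
    (phi cs) (cs.wordProd ω) (t, e)
      = (cs.wordProd ω * t * (cs.wordProd ω)⁻¹, e + eta cs (cs.wordProd ω) t) := by
  induction ω generalizing t e with
  | nil =>
    rw [cs.wordProd_nil, map_one]
    simp [eta, map_one]
  | cons i ω ih =>
    rw [cs.wordProd_cons, map_mul, Equiv.Perm.mul_apply, ih t e, phi_simple, gperm_apply]
    have heta : eta cs (cs.simple i * cs.wordProd ω) t
        = eta cs (cs.wordProd ω) t
          + ind (cs.wordProd ω * t * (cs.wordProd ω)⁻¹) (cs.simple i) := by
      unfold eta
      rw [map_mul, Equiv.Perm.mul_apply, ih t 0, phi_simple, gperm_apply]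
    rw [heta]
    refine Prod.ext ?_ ?_
    · dsimp only
      rw [mul_inv_rev, cs.inv_simple]
      simp only [mul_assoc]
    · dsimp only
      ring

lemma phi_apply (w t : W) (e : ZMod 2) :
    phi cs w (t, e) = (w * t * w⁻¹, e + eta cs w t) := by
  obtain ⟨ω, -, rfl⟩ := cs.exists_reduced_word' w
  exact phi_wordProd cs ω t e

lemma eta_mul (u v t : W) : eta cs (u * v) t = eta cs v t + eta cs u (v * t * v⁻¹) := by
  have h : (phi cs) (u * v) (t, 0)
      = ((u * v) * t * (u * v)⁻¹, 0 + (eta cs v t + eta cs u (v * t * v⁻¹))) := by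
    rw [map_mul, Equiv.Perm.mul_apply, phi_apply, phi_apply]
    refine Prod.ext ?_ ?_
    · dsimp only
      rw [mul_inv_rev]
      simp only [mul_assoc]
    · dsimp only
      ring
  have h2 := congrArg Prod.snd h
  dsimp only at h2
  rw [zero_add] at h2
  exact h2

lemma eta_one (t : W) : eta cs 1 t = 0 := by
  unfold eta
  rw [map_one]
  rfl

lemma eta_simple (i : B) (t : W) : eta cs (cs.simple i) t = ind t (cs.simple i) := by
  unfold eta
  rw [phi_simple, gperm_apply]
  exact zero_add _

lemma eta_inv_conj (x r : W) : eta cs x⁻¹ (x * r * x⁻¹) = eta cs x r := by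
  have h0 := eta_mul cs x⁻¹ x r
  rw [inv_mul_cancel, eta_one] at h0
  have hself := zmod2_add_self (eta cs x r)
  calc eta cs x⁻¹ (x * r * x⁻¹) = 0 + eta cs x⁻¹ (x * r * x⁻¹) := (zero_add _).symm
    _ = (eta cs x r + eta cs x r) + eta cs x⁻¹ (x * r * x⁻¹) := by rw [hself]
    _ = eta cs x r + (eta cs x r + eta cs x⁻¹ (x * r * x⁻¹)) := by ring
    _ = eta cs x r + 0 := by rw [← h0]
    _ = eta cs x r := by ring

lemma eta_refl_self {t : W} (ht : cs.IsReflection t) : eta cs t t = 1 := by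
  obtain ⟨x, i, rfl⟩ := ht
  have h1 := eta_mul cs (x * cs.simple i) x⁻¹ (x * cs.simple i * x⁻¹)
  have h2 : x⁻¹ * (x * cs.simple i * x⁻¹) * x⁻¹⁻¹ = cs.simple i := by group
  have h3 := eta_mul cs x (cs.simple i) (cs.simple i)
  have h4 : cs.simple i * cs.simple i * (cs.simple i)⁻¹ = cs.simple i := by
    rw [cs.simple_mul_simple_self, cs.inv_simple, one_mul]
  have h5 : eta cs (cs.simple i) (cs.simple i) = 1 := by
    rw [eta_simple]; exact ind_pos rfl
  rw [h1, h2, eta_inv_conj, h3, h4, h5]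
  exact (by decide : ∀ a : ZMod 2, a + (1 + a) = 1) _

lemma mem_rightInvSeq_of_eta {t : W} :
    ∀ {ω : List B}, eta cs (cs.wordProd ω) t = 1 → t ∈ cs.rightInvSeq ω := by
  intro ω
  induction ω with
  | nil =>
    intro h
    rw [cs.wordProd_nil, eta_one] at h
    exact absurd h (by decide)
  | cons i ω ih =>
    intro h
    rw [cs.wordProd_cons, eta_mul, eta_simple] at h
    have hconsdef : cs.rightInvSeq (i :: ω)
        = ((cs.wordProd ω)⁻¹ * cs.simple i * cs.wordProd ω) :: cs.rightInvSeq ω := rfl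
    by_cases hc : cs.wordProd ω * t * (cs.wordProd ω)⁻¹ = cs.simple i
    · have hct : t = (cs.wordProd ω)⁻¹ * cs.simple i * cs.wordProd ω := by
        rw [← hc]; group
      rw [hconsdef, hct]
      exact List.mem_cons_self
    · rw [ind_neg hc, add_zero] at h
      rw [hconsdef]
      exact List.mem_cons_of_mem _ (ih h)

lemma eta_eq_one_of_descent {w t : W} (ht : cs.IsReflection t)
    (h : cs.length (w * t) < cs.length w) : eta cs w t = 1 := by
  rcases zmod2_cases (eta cs w t) with h0 | h1
  · exfalso
    have htt : t * t = 1 := ht.mul_self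
    have h2 : eta cs (w * t) t = 1 := by
      rw [eta_mul]
      have e3 : t * t * t⁻¹ = t := by rw [htt, one_mul, ht.inv]
      rw [e3, eta_refl_self cs ht, h0, add_zero]
    obtain ⟨ω, hred, hw⟩ := cs.exists_reduced_word' (w * t)
    rw [hw] at h2
    have h3 := mem_rightInvSeq_of_eta cs h2
    have h4 := (cs.isRightInversion_of_mem_rightInvSeq hred h3).2
    rw [← hw, mul_assoc, htt, mul_one] at h4
    omega
  · exact h1

/-- The strong exchange property. -/
lemma strong_exchange {ω : List B} {t : W} (ht : cs.IsReflection t)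
    (h : cs.length (cs.wordProd ω * t) < cs.length (cs.wordProd ω)) :
    ∃ j < ω.length, cs.wordProd ω * t = cs.wordProd (ω.eraseIdx j) := by
  have h1 := eta_eq_one_of_descent cs ht h
  have h2 := mem_rightInvSeq_of_eta cs h1
  obtain ⟨j, hj, hgj⟩ := List.mem_iff_getElem.mp h2
  rw [cs.length_rightInvSeq] at hj
  refine ⟨j, hj, ?_⟩
  have h3 := cs.wordProd_mul_getD_rightInvSeq ω j
  rw [List.getD_eq_getElem _ 1 (by rw [cs.length_rightInvSeq]; exact hj), hgj] at h3
  exact h3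

lemma WP_mono {K K' : Set B} (h : K' ⊆ K) : WP cs K' ≤ WP cs K :=
  Subgroup.closure_mono (Set.image_mono h)

lemma simple_mem_WP {K : Set B} {i : B} (hi : i ∈ K) : cs.simple i ∈ WP cs K :=
  Subgroup.subset_closure ⟨i, hi, rfl⟩

lemma wordProd_mem_WP {K : Set B} {ω : List B} (h : ∀ i ∈ ω, i ∈ K) :
    cs.wordProd ω ∈ WP cs K := by
  induction ω with
  | nil => rw [cs.wordProd_nil]; exact one_mem _
  | cons i ω ih =>
    rw [cs.wordProd_cons]
    exact mul_mem (simple_mem_WP cs (h i List.mem_cons_self))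
      (ih fun a ha => h a (List.mem_cons_of_mem _ ha))

lemma exists_word_of_mem_WP {K : Set B} {b : W} (hb : b ∈ WP cs K) :
    ∃ ω, (∀ i ∈ ω, i ∈ K) ∧ b = cs.wordProd ω := by
  refine Subgroup.closure_induction ?_ ?_ ?_ ?_ hb
  · rintro x ⟨i, hi, rfl⟩
    exact ⟨[i], by simpa using hi, (cs.wordProd_singleton i).symm⟩
  · exact ⟨[], by simp, (cs.wordProd_nil).symm⟩
  · rintro x y - - ⟨ω₁, h₁, rfl⟩ ⟨ω₂, h₂, rfl⟩
    exact ⟨ω₁ ++ ω₂, fun a ha => (List.mem_append.mp ha).elim (h₁ a) (h₂ a),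
      (cs.wordProd_append ω₁ ω₂).symm⟩
  · rintro x - ⟨ω, h₁, rfl⟩
    exact ⟨ω.reverse, fun a ha => h₁ a (List.mem_reverse.mp ha),
      (cs.wordProd_reverse ω).symm⟩

lemma exists_shorter {K : Set B} :
    ∀ ω : List B, (∀ i ∈ ω, i ∈ K) → ¬cs.IsReduced ω →
      ∃ ω', (∀ i ∈ ω', i ∈ K) ∧ ω'.length < ω.length ∧ cs.wordProd ω' = cs.wordProd ω := by
  intro ω
  induction ω with
  | nil => intro _ hred; exact absurd (by simp [CoxeterSystem.IsReduced]) hred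
  | cons i ω₁ ih =>
    intro hK hred
    by_cases h1 : cs.IsReduced ω₁
    · have hlen1 : cs.length (cs.wordProd ω₁) = ω₁.length := h1
      rcases cs.length_simple_mul (cs.wordProd ω₁) i with hup | hdown
      · exfalso
        apply hred
        show cs.length (cs.wordProd (i :: ω₁)) = (i :: ω₁).length
        rw [cs.wordProd_cons, hup, hlen1, List.length_cons]
      · have hlt : cs.length (cs.wordProd ω₁.reverse * cs.simple i)
            < cs.length (cs.wordProd ω₁.reverse) := by
          rw [cs.wordProd_reverse]
          have e1 : ((cs.wordProd ω₁)⁻¹ * cs.simple i)⁻¹ = cs.simple i * cs.wordProd ω₁ := by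
            rw [mul_inv_rev, cs.inv_simple, inv_inv]
          have e2 : cs.length ((cs.wordProd ω₁)⁻¹ * cs.simple i)
              = cs.length (cs.simple i * cs.wordProd ω₁) := by
            rw [← cs.length_inv, e1]
          rw [e2, cs.length_inv]
          omega
        obtain ⟨j, hj, heq⟩ := strong_exchange cs (cs.isReflection_simple i) hlt
        refine ⟨(ω₁.reverse.eraseIdx j).reverse, ?_, ?_, ?_⟩
        · intro a ha
          rw [List.mem_reverse] at ha
          have ha2 := List.mem_of_mem_eraseIdx ha
          rw [List.mem_reverse] at ha2
          exact hK a (List.mem_cons_of_mem _ ha2)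
        · have hj2 : j < ω₁.length := by simpa using hj
          simp only [List.length_reverse, List.length_eraseIdx, List.length_cons]
          rw [if_pos hj2]
          omega
        · rw [cs.wordProd_reverse, ← heq, cs.wordProd_reverse, mul_inv_rev, inv_inv,
            cs.inv_simple, cs.wordProd_cons]
    · obtain ⟨ω', h1', h2', h3'⟩ := ih (fun a ha => hK a (List.mem_cons_of_mem _ ha)) h1
      refine ⟨i :: ω', ?_, ?_, ?_⟩
      · intro a ha
        rcases List.mem_cons.mp ha with h | h
        · exact h ▸ hK i List.mem_cons_self
        · exact h1' a h
      · simpa using Nat.succ_lt_succ h2'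
      · rw [cs.wordProd_cons, cs.wordProd_cons, h3']

lemma exists_reduced_word_of_mem_WP {K : Set B} {b : W} (hb : b ∈ WP cs K) :
    ∃ ω, (∀ i ∈ ω, i ∈ K) ∧ cs.IsReduced ω ∧ b = cs.wordProd ω := by
  obtain ⟨ω, hK, rfl⟩ := exists_word_of_mem_WP cs hb
  suffices h : ∀ (n : ℕ) (ω' : List B), ω'.length ≤ n → (∀ i ∈ ω', i ∈ K) →
      ∃ ω'', (∀ i ∈ ω'', i ∈ K) ∧ cs.IsReduced ω'' ∧ cs.wordProd ω' = cs.wordProd ω'' by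
    obtain ⟨ω'', a, b', c⟩ := h ω.length ω le_rfl hK
    exact ⟨ω'', a, b', c⟩
  intro n
  induction n with
  | zero =>
    intro ω' hlen _
    have hnil : ω' = [] := List.eq_nil_of_length_eq_zero (Nat.le_zero.mp hlen)
    subst hnil
    exact ⟨[], by simp, by simp [CoxeterSystem.IsReduced], rfl⟩
  | succ n ihn =>
    intro ω' hlen hK'
    by_cases hred : cs.IsReduced ω'
    · exact ⟨ω', hK', hred, rfl⟩
    · obtain ⟨ωa, g1, g2, g3⟩ := exists_shorter cs ω' hK' hred
      obtain ⟨ωb, f1, f2, f3⟩ := ihn ωa (by omega) g1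
      exact ⟨ωb, f1, f2, by rw [← g3, f3]⟩

lemma length_mul_wordProd {K : Set B} {w : W} (hw : IsMinR cs K w) :
    ∀ ω : List B, (∀ i ∈ ω, i ∈ K) → cs.IsReduced ω →
      cs.length (w * cs.wordProd ω) = cs.length w + ω.length := by
  intro ω
  induction ω using List.reverseRecOn with
  | nil => intro _ _; simp
  | append_singleton ω₀ i ih =>
    intro hK hred
    have hK₀ : ∀ a ∈ ω₀, a ∈ K := fun a ha => hK a (List.mem_append_left _ ha)
    have hiK : i ∈ K := hK i (List.mem_append_right _ (List.mem_singleton_self i))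
    have hred₀ : cs.IsReduced ω₀ := by
      have h := hred.take ω₀.length
      rwa [List.take_left] at h
    have ihh := ih hK₀ hred₀
    rw [cs.wordProd_append, cs.wordProd_singleton, List.length_append,
      List.length_singleton, ← mul_assoc]
    rcases cs.length_mul_simple (w * cs.wordProd ω₀) i with hup | hdown
    · rw [hup, ihh]
      omega
    · exfalso
      have hlt : cs.length (w * cs.wordProd ω₀ * cs.simple i)
          < cs.length (w * cs.wordProd ω₀) := by omega
      obtain ⟨τ, hτred, hτ⟩ := cs.exists_reduced_word' w
      have hτlen : τ.length = cs.length w := by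
        have hh : cs.length (cs.wordProd τ) = τ.length := hτred
        rw [hτ, hh]
      have hπσ : cs.wordProd (τ ++ ω₀) = w * cs.wordProd ω₀ := by
        rw [cs.wordProd_append, ← hτ]
      obtain ⟨j, hj, heq⟩ := strong_exchange cs (cs.isReflection_simple i)
        (by rw [hπσ]; exact hlt)
      rw [hπσ] at heq
      rw [List.length_append] at hj
      rcases Nat.lt_or_ge j τ.length with hjτ | hjτ
      · rw [List.eraseIdx_append_of_lt_length hjτ, cs.wordProd_append] at heq
        have hcmem : cs.wordProd ω₀ * cs.simple i * (cs.wordProd ω₀)⁻¹ ∈ WP cs K :=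
          mul_mem (mul_mem (wordProd_mem_WP cs hK₀) (simple_mem_WP cs hiK))
            (inv_mem (wordProd_mem_WP cs hK₀))
        have hwc : w * (cs.wordProd ω₀ * cs.simple i * (cs.wordProd ω₀)⁻¹)
            = cs.wordProd (τ.eraseIdx j) := by
          calc w * (cs.wordProd ω₀ * cs.simple i * (cs.wordProd ω₀)⁻¹)
              = (w * cs.wordProd ω₀ * cs.simple i) * (cs.wordProd ω₀)⁻¹ := by
                simp only [mul_assoc]
            _ = (cs.wordProd (τ.eraseIdx j) * cs.wordProd ω₀) * (cs.wordProd ω₀)⁻¹ := by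
                rw [heq]
            _ = cs.wordProd (τ.eraseIdx j) := by group
        have hlenc : cs.length (w * (cs.wordProd ω₀ * cs.simple i * (cs.wordProd ω₀)⁻¹))
            < cs.length w := by
          rw [hwc]
          have h5 := cs.length_wordProd_le (τ.eraseIdx j)
          have h6 : (τ.eraseIdx j).length = τ.length - 1 := by
            rw [List.length_eraseIdx]
            simp [hjτ]
          omega
        have hne : w * (cs.wordProd ω₀ * cs.simple i * (cs.wordProd ω₀)⁻¹) ≠ w := by
          intro hcontra
          rw [hcontra] at hlenc
          exact lt_irrefl _ hlenc
        have hcon := hw _ hcmem hne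
        omega
      · rw [List.eraseIdx_append_of_length_le hjτ, cs.wordProd_append, ← hτ] at heq
        have hcan : cs.wordProd ω₀ * cs.simple i
            = cs.wordProd (ω₀.eraseIdx (j - τ.length)) := by
          have hh : w * (cs.wordProd ω₀ * cs.simple i)
              = w * cs.wordProd (ω₀.eraseIdx (j - τ.length)) := by
            rw [← mul_assoc]; exact heq
          exact mul_left_cancel hh
        have h9 : j - τ.length < ω₀.length := by omega
        have h7 : cs.length (cs.wordProd ω₀ * cs.simple i)
            ≤ (ω₀.eraseIdx (j - τ.length)).length := by
          rw [hcan]; exact cs.length_wordProd_le _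
        have h8 : (ω₀.eraseIdx (j - τ.length)).length = ω₀.length - 1 := by
          rw [List.length_eraseIdx]
          simp [h9]
        have h10 : cs.length (cs.wordProd ω₀ * cs.simple i) = ω₀.length + 1 := by
          have hh : cs.length (cs.wordProd (ω₀ ++ [i])) = (ω₀ ++ [i]).length := hred
          rwa [cs.wordProd_append, cs.wordProd_singleton, List.length_append,
            List.length_singleton] at hh
        omega

lemma length_mul_of_isMinR {K : Set B} {w : W} (hw : IsMinR cs K w) {b : W}
    (hb : b ∈ WP cs K) : cs.length (w * b) = cs.length w + cs.length b := by
  obtain ⟨ω, hK, hred, rfl⟩ := exists_reduced_word_of_mem_WP cs hb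
  rw [length_mul_wordProd cs hw ω hK hred,
    show cs.length (cs.wordProd ω) = ω.length from hred]

lemma isMinR_mul {K K' : Set B} (hKK' : K' ⊆ K) {w u : W}
    (hw : IsMinR cs K w) (hu : u ∈ WP cs K) (hu' : IsMinR cs K' u) :
    IsMinR cs K' (w * u) := by
  intro b hb hne
  have hbK : b ∈ WP cs K := WP_mono cs hKK' hb
  have hb1 : b ≠ 1 := by rintro rfl; exact hne (mul_one _)
  have h1 : cs.length (w * u * b) = cs.length w + cs.length (u * b) := by
    rw [mul_assoc]
    exact length_mul_of_isMinR cs hw (mul_mem hu hbK)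
  have h2 : cs.length (w * u) = cs.length w + cs.length u :=
    length_mul_of_isMinR cs hw hu
  have h3 : cs.length u < cs.length (u * b) :=
    hu' b hb (fun h => hb1 (mul_left_cancel (h.trans (mul_one u).symm)))
  omega

end ExchangeTheory

lemma pr_succ (u : ℕ → W) (n : ℕ) : pr u (n + 1) = pr u n * u n := by
  simp [pr, List.range_succ]

/-- 2.4(c): for `(J_n, J'_n, u_n) ∈ S(J, ε)` and every `n ≥ 0`, the product
`u_0 u_1 ⋯ u_n` is a minimal length representative of its left coset
modulo `W_{J_n}`, i.e. lies in `Wᴶⁿ`. -/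
theorem statement4 (cs : CoxeterSystem M W) (f : B ≃ B) (e : W ≃* W)
    (hef : ∀ b, e (cs.simple b) = cs.simple (f b)) (J J' : Set B)
    (hJ' : f '' J = J') (s : SSeq cs f J) :
    ∀ n, IsMinR cs (s.Jn n) (pr s.u (n + 1)) := by
  intro n
  induction n with
  | zero =>
    have h := (s.he 0).2
    have h1 : pr s.u 1 = s.u 0 := by rw [pr_succ]; simp [pr]
    rw [h1]
    exact h
  | succ n ih =>
    rw [pr_succ]
    exact isMinR_mul cs (s.hmono n) ih (s.hd n) ((s.he (n + 1)).2)

end Lusztig
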